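/- Let P and P* be n×n real matrices satisfying P P* = P*, P* P = P*, and P* P* = P*, let α ∈ ℝ with α ≠ 1, and suppose that both I − α P and I − α P + α P* are invertible. Then the deviation matrix H(α) := (I − α P)⁻¹ − (1−α)⁻¹ P* satisfies H(α) = (I − α P + α P*)⁻¹ − P*. -/

import Mathlib

open Matrix

/-- The deviation matrix H(α) = (I − α P)⁻¹ − (1−α)⁻¹ P* equals
(I − α P + α P*)⁻¹ − P*. -/
theorem deviation_matrix_formula {n : ℕ} (hn : 1 ≤ n)
    (P Ps : Matrix (Fin n) (Fin n) ℝ) (α : ℝ) (hα : α ≠ 1)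
    (h1 : P * Ps = Ps) (h2 : Ps * P = Ps) (h3 : Ps * Ps = Ps)
    (hinv₁ : IsUnit (1 - α • P).det)
    (hinv₂ : IsUnit (1 - α • P + α • Ps).det) :
    (1 - α • P)⁻¹ - (1 - α)⁻¹ • Ps = (1 - α • P + α • Ps)⁻¹ - Ps := by
  have h1α : (1:ℝ) - α ≠ 0 := sub_ne_zero.mpr (Ne.symm hα)
  have hAinv : (1 - α • P) * (1 - α • P)⁻¹ = 1 := mul_nonsing_inv _ hinv₁
  have hPsA : Ps * (1 - α • P) = (1 - α) • Ps := by
    rw [mul_sub, mul_one, Matrix.mul_smul, h2, sub_smul, one_smul]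
  have hPsAinv : Ps * (1 - α • P)⁻¹ = (1 - α)⁻¹ • Ps := by
    have h : Ps = (1 - α) • (Ps * (1 - α • P)⁻¹) := by
      calc Ps = Ps * ((1 - α • P) * (1 - α • P)⁻¹) := by rw [hAinv, mul_one]
        _ = (1 - α) • (Ps * (1 - α • P)⁻¹) := by
            rw [← mul_assoc, hPsA, Matrix.smul_mul]
    conv_rhs => rw [h]
    rw [smul_smul, inv_mul_cancel₀ h1α, one_smul]
  have hBPs : (1 - α • P + α • Ps) * Ps = Ps := by
    rw [add_mul, sub_mul, one_mul, Matrix.smul_mul, Matrix.smul_mul, h1, h3]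
    abel
  have hBinv : (1 - α • P + α • Ps)⁻¹
      = (1 - α • P)⁻¹ - (1 - α)⁻¹ • Ps + Ps := by
    apply inv_eq_right_inv
    rw [mul_add, mul_sub, hBPs, Matrix.mul_smul, hBPs,
      add_mul, Matrix.smul_mul, hPsAinv, hAinv, smul_smul]
    match_scalars <;> field_simp <;> ring
  rw [hBinv]
  abel
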